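/- Let V ⊆ ℤ² be a finite set with |V| = 3k, let G be the grid graph on V (two vertices are adjacent if and only if their Euclidean distance is 1), and let T : ℤ² → ℝ² be the map T(x,y) = (x − y, x + y). Then the vertices of G can be partitioned into k vertex-disjoint paths on three vertices each (a P₃-partition) if and only if there exists a set Φ of 2k axis-parallel closed unit squares in ℝ² that is a discriminating code for the point set T(V) = {T(v) : v ∈ V}. -/

import Mathlib

/-- A point `p` belongs to the axis-parallel closed unit square centered at `c`
(the closed ball of radius `1/2` in the sup metric of `ℝ × ℝ`). -/
def inSq (p c : ℝ × ℝ) : Prop := dist p c ≤ 1 / 2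

/-- The code of a point `p` with respect to a finite set `Φ` of axis-parallel
closed unit squares, given by their centers. -/
def sqCode (Φ : Finset (ℝ × ℝ)) (p : ℝ × ℝ) : Set (ℝ × ℝ) :=
  {c | c ∈ Φ ∧ inSq p c}

/-- The map `T(x, y) = (x - y, x + y)` (rotation by `π/4` and scaling by `√2`). -/
def Tmap (u : ℤ × ℤ) : ℝ × ℝ := ((u.1 : ℝ) - (u.2 : ℝ), (u.1 : ℝ) + (u.2 : ℝ))

/-- Euclidean distance between two points of `ℤ²`. -/
noncomputable def eucDist (u v : ℤ × ℤ) : ℝ :=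
  Real.sqrt (((u.1 - v.1 : ℤ) : ℝ) ^ 2 + ((u.2 - v.2 : ℤ) : ℝ) ^ 2)

/-- Adjacency in the grid graph: Euclidean distance exactly `1`. -/
noncomputable def gridAdj (a b : ℤ × ℤ) : Prop := eucDist a b = 1

lemma Tmap_inj : Function.Injective Tmap := by
  rintro ⟨u1, u2⟩ ⟨v1, v2⟩ h
  have h1 := congrArg Prod.fst h
  have h2 := congrArg Prod.snd h
  simp only [Tmap] at h1 h2
  have hu1 : (u1 : ℝ) = v1 := by linarith
  have hu2 : (u2 : ℝ) = v2 := by linarith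
  exact Prod.ext (by exact_mod_cast hu1) (by exact_mod_cast hu2)

lemma inSq_iff (p c : ℝ × ℝ) : inSq p c ↔ |p.1 - c.1| ≤ 1/2 ∧ |p.2 - c.2| ≤ 1/2 := by
  rw [inSq, Prod.dist_eq, max_le_iff, Real.dist_eq, Real.dist_eq]

lemma sq_sum_eq_one {d1 d2 : ℤ} : d1^2 + d2^2 = 1 ↔
    ((d1 = 1 ∨ d1 = -1) ∧ d2 = 0) ∨ (d1 = 0 ∧ (d2 = 1 ∨ d2 = -1)) := by
  constructor
  · intro h
    have h1 : -1 ≤ d1 := by nlinarith [sq_nonneg d2]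
    have h2 : d1 ≤ 1 := by nlinarith [sq_nonneg d2]
    have h3 : -1 ≤ d2 := by nlinarith [sq_nonneg d1]
    have h4 : d2 ≤ 1 := by nlinarith [sq_nonneg d1]
    interval_cases d1 <;> interval_cases d2 <;> revert h <;> norm_num
  · rintro (⟨h | h, h2⟩ | ⟨h1, h | h⟩) <;> subst_vars <;> norm_num

lemma gridAdj_iff (a b : ℤ × ℤ) : gridAdj a b ↔
    ((a.1 - b.1 = 1 ∨ a.1 - b.1 = -1) ∧ a.2 = b.2) ∨
    (a.1 = b.1 ∧ (a.2 - b.2 = 1 ∨ a.2 - b.2 = -1)) := by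
  rw [gridAdj, eucDist]
  rw [show (1 : ℝ) = Real.sqrt 1 by simp]
  rw [Real.sqrt_inj (by positivity) (by norm_num)]
  rw [show (((a.1 - b.1 : ℤ) : ℝ) ^ 2 + ((a.2 - b.2 : ℤ) : ℝ) ^ 2 = 1) ↔
      ((a.1 - b.1) ^ 2 + (a.2 - b.2) ^ 2 = 1) by exact_mod_cast Iff.rfl]
  rw [sq_sum_eq_one]
  omega

lemma gridAdj_ne {a b : ℤ × ℤ} (h : gridAdj a b) : a ≠ b := by
  rw [gridAdj_iff] at h
  intro he
  subst he
  omega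

lemma close_of_share {u v : ℤ × ℤ} {c : ℝ × ℝ} (hu : inSq (Tmap u) c)
    (hv : inSq (Tmap v) c) :
    |(u.1 - u.2) - (v.1 - v.2)| ≤ 1 ∧ |(u.1 + u.2) - (v.1 + v.2)| ≤ 1 := by
  rw [inSq_iff] at hu hv
  have h1 : |(Tmap u).1 - (Tmap v).1| ≤ 1 := by
    have := abs_sub_abs_le_abs_sub ((Tmap u).1 - c.1) ((Tmap v).1 - c.1)
    have := abs_sub ((Tmap u).1 - c.1) ((Tmap v).1 - c.1)
    calc |(Tmap u).1 - (Tmap v).1| = |((Tmap u).1 - c.1) - ((Tmap v).1 - c.1)| := by ring_nf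
      _ ≤ |(Tmap u).1 - c.1| + |(Tmap v).1 - c.1| := abs_sub _ _
      _ ≤ 1 := by linarith [hu.1, hv.1]
  have h2 : |(Tmap u).2 - (Tmap v).2| ≤ 1 := by
    calc |(Tmap u).2 - (Tmap v).2| = |((Tmap u).2 - c.2) - ((Tmap v).2 - c.2)| := by ring_nf
      _ ≤ |(Tmap u).2 - c.2| + |(Tmap v).2 - c.2| := abs_sub _ _
      _ ≤ 1 := by linarith [hu.2, hv.2]
  simp only [Tmap] at h1 h2
  constructor
  · have : |((u.1 - u.2 - (v.1 - v.2) : ℤ) : ℝ)| ≤ 1 := by push_cast; convert h1 using 2 <;> ring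
    exact_mod_cast this
  · have : |((u.1 + u.2 - (v.1 + v.2) : ℤ) : ℝ)| ≤ 1 := by push_cast; convert h2 using 2 <;> ring
    exact_mod_cast this

lemma adj_of_share {u v : ℤ × ℤ} {c : ℝ × ℝ} (hu : inSq (Tmap u) c)
    (hv : inSq (Tmap v) c) (hne : u ≠ v) : gridAdj u v := by
  obtain ⟨h1, h2⟩ := close_of_share hu hv
  rw [abs_le] at h1 h2
  rw [gridAdj_iff]
  have hne' : u.1 ≠ v.1 ∨ u.2 ≠ v.2 := by
    by_contra h; push_neg at h; exact hne (Prod.ext h.1 h.2)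
  omega

lemma not_three {u v w : ℤ × ℤ} {c : ℝ × ℝ} (hu : inSq (Tmap u) c)
    (hv : inSq (Tmap v) c) (hw : inSq (Tmap w) c)
    (huv : u ≠ v) (huw : u ≠ w) (hvw : v ≠ w) : False := by
  obtain ⟨h1, h2⟩ := close_of_share hu hv
  obtain ⟨h3, h4⟩ := close_of_share hu hw
  obtain ⟨h5, h6⟩ := close_of_share hv hw
  rw [abs_le] at h1 h2 h3 h4 h5 h6
  have e1 : u.1 ≠ v.1 ∨ u.2 ≠ v.2 := by
    by_contra h; push_neg at h; exact huv (Prod.ext h.1 h.2)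
  have e2 : u.1 ≠ w.1 ∨ u.2 ≠ w.2 := by
    by_contra h; push_neg at h; exact huw (Prod.ext h.1 h.2)
  have e3 : v.1 ≠ w.1 ∨ v.2 ≠ w.2 := by
    by_contra h; push_neg at h; exact hvw (Prod.ext h.1 h.2)
  omega

noncomputable def mid (p q : ℝ × ℝ) : ℝ × ℝ := ((p.1 + q.1)/2, (p.2 + q.2)/2)

lemma mem_mid_iff {a b : ℤ × ℤ} (hab : gridAdj a b) (v : ℤ × ℤ) :
    inSq (Tmap v) (mid (Tmap a) (Tmap b)) ↔ v = a ∨ v = b := by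
  rw [gridAdj_iff] at hab
  rw [inSq_iff]
  simp only [mid, Tmap]
  have key1 : |((v.1:ℝ) - v.2 - ((a.1 - a.2) + (b.1 - b.2))/2)| ≤ 1/2 ↔
      |((2*(v.1 - v.2) - (a.1 - a.2) - (b.1 - b.2) : ℤ) : ℝ)| ≤ 1 := by
    rw [abs_le, abs_le]
    push_cast
    constructor <;> intro h <;> constructor <;> linarith [h.1, h.2]
  have key2 : |((v.1:ℝ) + v.2 - ((a.1 + a.2) + (b.1 + b.2))/2)| ≤ 1/2 ↔
      |((2*(v.1 + v.2) - (a.1 + a.2) - (b.1 + b.2) : ℤ) : ℝ)| ≤ 1 := by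
    rw [abs_le, abs_le]
    push_cast
    constructor <;> intro h <;> constructor <;> linarith [h.1, h.2]
  rw [key1, key2]
  rw [show |((2*(v.1 - v.2) - (a.1 - a.2) - (b.1 - b.2) : ℤ) : ℝ)| ≤ 1 ↔
      |(2*(v.1 - v.2) - (a.1 - a.2) - (b.1 - b.2) : ℤ)| ≤ 1 by exact_mod_cast Iff.rfl]
  rw [show |((2*(v.1 + v.2) - (a.1 + a.2) - (b.1 + b.2) : ℤ) : ℝ)| ≤ 1 ↔
      |(2*(v.1 + v.2) - (a.1 + a.2) - (b.1 + b.2) : ℤ)| ≤ 1 by exact_mod_cast Iff.rfl]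
  rw [abs_le, abs_le, Prod.ext_iff, Prod.ext_iff]
  omega

theorem stmt16 (V : Finset (ℤ × ℤ)) (k : ℕ) (hV : V.card = 3 * k) :
    (∃ Pt : Finset (Finset (ℤ × ℤ)),
      Pt.card = k ∧
      (∀ t ∈ Pt, t ⊆ V) ∧
      (∀ t₁ ∈ Pt, ∀ t₂ ∈ Pt, t₁ ≠ t₂ → Disjoint t₁ t₂) ∧
      V = Pt.biUnion id ∧
      (∀ t ∈ Pt, ∃ a b c : ℤ × ℤ,
        a ≠ c ∧ gridAdj a b ∧ gridAdj b c ∧ t = {a, b, c})) ↔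
    (∃ Φ : Finset (ℝ × ℝ),
      Φ.card = 2 * k ∧
      (∀ v ∈ V, ∃ c ∈ Φ, inSq (Tmap v) c) ∧
      (∀ u ∈ V, ∀ v ∈ V, Tmap u ≠ Tmap v →
        sqCode Φ (Tmap u) ≠ sqCode Φ (Tmap v))) := by
  classical
  constructor
  · rintro ⟨Pt, hPtcard, hPtsub, hPtdisj, hPtunion, hPtpath⟩
    have hch : ∀ t : Finset (ℤ × ℤ), ∃ a b c : ℤ × ℤ, t ∈ Pt →
        (a ≠ c ∧ gridAdj a b ∧ gridAdj b c ∧ t = {a, b, c}) := by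
      intro t
      by_cases h : t ∈ Pt
      · obtain ⟨a, b, c, h1, h2, h3, h4⟩ := hPtpath t h
        exact ⟨a, b, c, fun _ => ⟨h1, h2, h3, h4⟩⟩
      · exact ⟨(0,0), (0,0), (0,0), fun ht => absurd ht h⟩
    choose A B C hABC using hch
    set m1 : Finset (ℤ × ℤ) → ℝ × ℝ := fun t => mid (Tmap (A t)) (Tmap (B t)) with hm1def
    set m2 : Finset (ℤ × ℤ) → ℝ × ℝ := fun t => mid (Tmap (B t)) (Tmap (C t)) with hm2def
    have hmem1 : ∀ t ∈ Pt, ∀ v, inSq (Tmap v) (m1 t) ↔ v = A t ∨ v = B t :=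
      fun t ht v => mem_mid_iff (hABC t ht).2.1 v
    have hmem2 : ∀ t ∈ Pt, ∀ v, inSq (Tmap v) (m2 t) ↔ v = B t ∨ v = C t :=
      fun t ht v => mem_mid_iff (hABC t ht).2.2.1 v
    have hAB : ∀ t ∈ Pt, A t ≠ B t := fun t ht => gridAdj_ne (hABC t ht).2.1
    have hBC : ∀ t ∈ Pt, B t ≠ C t := fun t ht => gridAdj_ne (hABC t ht).2.2.1
    have hAC : ∀ t ∈ Pt, A t ≠ C t := fun t ht => (hABC t ht).1
    have hAmem : ∀ t ∈ Pt, A t ∈ t := by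
      intro t ht
      have hx3 : A t ∈ ({A t, B t, C t} : Finset (ℤ × ℤ)) := by simp
      rwa [← (hABC t ht).2.2.2] at hx3
    have hBmem : ∀ t ∈ Pt, B t ∈ t := by
      intro t ht
      have hx3 : B t ∈ ({A t, B t, C t} : Finset (ℤ × ℤ)) := by simp
      rwa [← (hABC t ht).2.2.2] at hx3
    have hCmem : ∀ t ∈ Pt, C t ∈ t := by
      intro t ht
      have hx3 : C t ∈ ({A t, B t, C t} : Finset (ℤ × ℤ)) := by simp
      rwa [← (hABC t ht).2.2.2] at hx3
    have hm12 : ∀ t ∈ Pt, m1 t ≠ m2 t := by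
      intro t ht he
      have h1 : inSq (Tmap (A t)) (m1 t) := (hmem1 t ht (A t)).mpr (Or.inl rfl)
      rw [he] at h1
      rcases (hmem2 t ht (A t)).mp h1 with h | h
      · exact hAB t ht h
      · exact hAC t ht h
    refine ⟨Pt.biUnion (fun t => {m1 t, m2 t}), ?_, ?_, ?_⟩
    · rw [Finset.card_biUnion]
      · rw [Finset.sum_congr rfl (fun t ht => Finset.card_pair (hm12 t ht)),
          Finset.sum_const, smul_eq_mul, hPtcard, mul_comm]
      · intro t ht t' ht' hne
        simp only [Function.onFun]
        rw [Finset.disjoint_left]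
        intro x hx hx'
        have hBt : inSq (Tmap (B t)) x := by
          rcases Finset.mem_insert.mp hx with h | h
          · rw [h]; exact (hmem1 t ht (B t)).mpr (Or.inr rfl)
          · rw [Finset.mem_singleton.mp h]; exact (hmem2 t ht (B t)).mpr (Or.inl rfl)
        have hBt' : B t ∈ t' := by
          rcases Finset.mem_insert.mp hx' with h | h
          · rw [h] at hBt
            rcases (hmem1 t' ht' (B t)).mp hBt with h2 | h2
            · rw [h2]; exact hAmem t' ht'
            · rw [h2]; exact hBmem t' ht'
          · rw [Finset.mem_singleton.mp h] at hBt
            rcases (hmem2 t' ht' (B t)).mp hBt with h2 | h2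
            · rw [h2]; exact hBmem t' ht'
            · rw [h2]; exact hCmem t' ht'
        exact (Finset.disjoint_left.mp (hPtdisj t ht t' ht' hne)) (hBmem t ht) hBt'
    · intro v hv
      rw [hPtunion] at hv
      obtain ⟨t, ht, hvt⟩ := Finset.mem_biUnion.mp hv
      simp only [id] at hvt
      have hm1Φ : m1 t ∈ Pt.biUnion (fun t => {m1 t, m2 t}) :=
        Finset.mem_biUnion.mpr ⟨t, ht, Finset.mem_insert_self _ _⟩
      have hm2Φ : m2 t ∈ Pt.biUnion (fun t => {m1 t, m2 t}) :=
        Finset.mem_biUnion.mpr ⟨t, ht, Finset.mem_insert_of_mem (Finset.mem_singleton_self _)⟩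
      rw [(hABC t ht).2.2.2] at hvt
      rcases Finset.mem_insert.mp hvt with h | hvt
      · exact ⟨m1 t, hm1Φ, (hmem1 t ht v).mpr (Or.inl h)⟩
      rcases Finset.mem_insert.mp hvt with h | hvt
      · exact ⟨m1 t, hm1Φ, (hmem1 t ht v).mpr (Or.inr h)⟩
      · exact ⟨m2 t, hm2Φ, (hmem2 t ht v).mpr (Or.inr (Finset.mem_singleton.mp hvt))⟩
    · intro u hu v hv hTne heq
      have hne : u ≠ v := fun h => hTne (by rw [h])
      have hext : ∀ x : ℝ × ℝ,
          (x ∈ Pt.biUnion (fun t => {m1 t, m2 t}) ∧ inSq (Tmap u) x) ↔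
          (x ∈ Pt.biUnion (fun t => {m1 t, m2 t}) ∧ inSq (Tmap v) x) := by
        intro x
        have := Set.ext_iff.mp heq x
        simpa [sqCode] using this
      -- u is covered by some square
      obtain ⟨t, ht, hut⟩ : ∃ t ∈ Pt, u ∈ t := by
        have : u ∈ Pt.biUnion id := hPtunion ▸ hu
        simpa using Finset.mem_biUnion.mp this
      have hm1Φ : m1 t ∈ Pt.biUnion (fun t => {m1 t, m2 t}) :=
        Finset.mem_biUnion.mpr ⟨t, ht, Finset.mem_insert_self _ _⟩
      have hm2Φ : m2 t ∈ Pt.biUnion (fun t => {m1 t, m2 t}) :=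
        Finset.mem_biUnion.mpr ⟨t, ht, Finset.mem_insert_of_mem (Finset.mem_singleton_self _)⟩
      -- key: u,v in a common square x, some case analysis
      have hx : ∃ x, (x ∈ Pt.biUnion (fun t => {m1 t, m2 t})) ∧ inSq (Tmap u) x := by
        rw [(hABC t ht).2.2.2] at hut
        rcases Finset.mem_insert.mp hut with h | hut
        · exact ⟨m1 t, hm1Φ, (hmem1 t ht u).mpr (Or.inl h)⟩
        rcases Finset.mem_insert.mp hut with h | hut
        · exact ⟨m1 t, hm1Φ, (hmem1 t ht u).mpr (Or.inr h)⟩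
        · exact ⟨m2 t, hm2Φ, (hmem2 t ht u).mpr (Or.inr (Finset.mem_singleton.mp hut))⟩
      obtain ⟨x, hxΦ, hxu⟩ := hx
      have hxv : inSq (Tmap v) x := ((hext x).mp ⟨hxΦ, hxu⟩).2
      obtain ⟨s, hs, hxs⟩ := Finset.mem_biUnion.mp hxΦ
      have hm1s : m1 s ∈ Pt.biUnion (fun t => {m1 t, m2 t}) :=
        Finset.mem_biUnion.mpr ⟨s, hs, Finset.mem_insert_self _ _⟩
      have hm2s : m2 s ∈ Pt.biUnion (fun t => {m1 t, m2 t}) :=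
        Finset.mem_biUnion.mpr ⟨s, hs, Finset.mem_insert_of_mem (Finset.mem_singleton_self _)⟩
      have hAm2 : ¬ inSq (Tmap (A s)) (m2 s) := by
        intro h
        rcases (hmem2 s hs (A s)).mp h with h2 | h2
        · exact hAB s hs h2
        · exact hAC s hs h2
      have hCm1 : ¬ inSq (Tmap (C s)) (m1 s) := by
        intro h
        rcases (hmem1 s hs (C s)).mp h with h2 | h2
        · exact hAC s hs h2.symm
        · exact hBC s hs h2.symm
      have hBm1 : inSq (Tmap (B s)) (m1 s) := (hmem1 s hs (B s)).mpr (Or.inr rfl)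
      have hBm2 : inSq (Tmap (B s)) (m2 s) := (hmem2 s hs (B s)).mpr (Or.inl rfl)
      rcases Finset.mem_insert.mp hxs with hx1 | hx2
      · -- x = m1 s, so {u,v} = {A s, B s}
        rw [hx1] at hxu hxv
        rcases (hmem1 s hs u).mp hxu with hu1 | hu1 <;>
          rcases (hmem1 s hs v).mp hxv with hv1 | hv1
        · exact hne (hu1.trans hv1.symm)
        · -- u = A s, v = B s : use m2 s
          have := ((hext (m2 s)).mpr ⟨hm2s, by rw [hv1]; exact hBm2⟩).2
          rw [hu1] at this
          exact hAm2 this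
        · have := ((hext (m2 s)).mp ⟨hm2s, by rw [hu1]; exact hBm2⟩).2
          rw [hv1] at this
          exact hAm2 this
        · exact hne (hu1.trans hv1.symm)
      · -- x = m2 s, so {u,v} = {B s, C s}
        rw [Finset.mem_singleton.mp hx2] at hxu hxv
        rcases (hmem2 s hs u).mp hxu with hu1 | hu1 <;>
          rcases (hmem2 s hs v).mp hxv with hv1 | hv1
        · exact hne (hu1.trans hv1.symm)
        · have := ((hext (m1 s)).mp ⟨hm1s, by rw [hu1]; exact hBm1⟩).2
          rw [hv1] at this
          exact hCm1 this
        · have := ((hext (m1 s)).mpr ⟨hm1s, by rw [hv1]; exact hBm1⟩).2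
          rw [hu1] at this
          exact hCm1 this
        · exact hne (hu1.trans hv1.symm)

  ·
    rintro ⟨Φ, hΦcard, hΦcover, hΦcode⟩
    set code : ℤ × ℤ → Finset (ℝ × ℝ) := fun v => Φ.filter (fun c => inSq (Tmap v) c) with hcodedef
    set cov : ℝ × ℝ → Finset (ℤ × ℤ) := fun c => V.filter (fun v => inSq (Tmap v) c) with hcovdef
    have hmem_code : ∀ v c, c ∈ code v ↔ c ∈ Φ ∧ inSq (Tmap v) c := by
      intro v c; rw [hcodedef]; exact Finset.mem_filter
    have hmem_cov : ∀ c v, v ∈ cov c ↔ v ∈ V ∧ inSq (Tmap v) c := by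
      intro c v; rw [hcovdef]; exact Finset.mem_filter
    have hcodeinj : ∀ u ∈ V, ∀ v ∈ V, code u = code v → u = v := by
      intro u hu v hv h
      by_contra hne
      have hT : Tmap u ≠ Tmap v := fun he => hne (Tmap_inj he)
      apply hΦcode u hu v hv hT
      ext x
      simp only [sqCode, Set.mem_setOf_eq]
      constructor
      · rintro ⟨h1, h2⟩
        have hx : x ∈ code u := (hmem_code u x).mpr ⟨h1, h2⟩
        rw [h] at hx
        exact (hmem_code v x).mp hx
      · rintro ⟨h1, h2⟩
        have hx : x ∈ code v := (hmem_code v x).mpr ⟨h1, h2⟩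
        rw [← h] at hx
        exact (hmem_code u x).mp hx
    have hcov2 : ∀ c, (cov c).card ≤ 2 := by
      intro c
      by_contra h
      push_neg at h
      obtain ⟨x, y, z, hx, hy, hz, hxy, hxz, hyz⟩ := Finset.two_lt_card_iff.mp h
      exact not_three ((hmem_cov c x).mp hx).2 ((hmem_cov c y).mp hy).2
        ((hmem_cov c z).mp hz).2 hxy hxz hyz
    have hcode1 : ∀ v ∈ V, 1 ≤ (code v).card := by
      intro v hv
      obtain ⟨c, hc, hc2⟩ := hΦcover v hv
      exact Finset.card_pos.mpr ⟨c, (hmem_code v c).mpr ⟨hc, hc2⟩⟩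
    have hswap : ∑ v ∈ V, (code v).card = ∑ c ∈ Φ, (cov c).card := by
      rw [hcodedef, hcovdef]
      simp only [Finset.card_filter]
      exact Finset.sum_comm
    set D1 := V.filter (fun v => (code v).card = 1) with hD1def
    set D2 := V.filter (fun v => (code v).card = 2) with hD2def
    have hf' : ∀ v : ℤ × ℤ, ∃ c : ℝ × ℝ, (code v).card = 1 → code v = {c} := by
      intro v
      by_cases h : (code v).card = 1
      · obtain ⟨c, hc⟩ := Finset.card_eq_one.mp h
        exact ⟨c, fun _ => hc⟩
      · exact ⟨(0,0), fun hh => absurd hh h⟩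
    choose f hfs using hf'
    have hfΦ : ∀ v ∈ D1, f v ∈ Φ := by
      intro v hv
      have h1 := (Finset.mem_filter.mp hv).2
      have h2 : f v ∈ code v := by rw [hfs v h1]; exact Finset.mem_singleton_self _
      exact ((hmem_code v (f v)).mp h2).1
    have hfinj : ∀ u ∈ D1, ∀ v ∈ D1, f u = f v → u = v := by
      intro u hu v hv h
      obtain ⟨huV, hu1⟩ := Finset.mem_filter.mp hu
      obtain ⟨hvV, hv1⟩ := Finset.mem_filter.mp hv
      exact hcodeinj u huV v hvV (by rw [hfs u hu1, hfs v hv1, h])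
    have hD1le : D1.card ≤ 2 * k := by
      rw [← hΦcard]
      exact Finset.card_le_card_of_injOn f hfΦ hfinj
    have hNle : ∑ v ∈ V, (code v).card ≤ 4 * k := by
      rw [hswap]
      calc ∑ c ∈ Φ, (cov c).card ≤ ∑ _c ∈ Φ, 2 := Finset.sum_le_sum (fun c _ => hcov2 c)
        _ = 4 * k := by rw [Finset.sum_const, smul_eq_mul, hΦcard]; ring
    have hsplit : ∑ v ∈ D1, (code v).card
        + ∑ v ∈ V.filter (fun v => ¬ (code v).card = 1), (code v).card
        = ∑ v ∈ V, (code v).card := by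
      rw [hD1def]
      exact Finset.sum_filter_add_sum_filter_not V _ _
    have hcards : D1.card + (V.filter (fun v => ¬ (code v).card = 1)).card = 3 * k := by
      rw [hD1def, ← hV]
      exact Finset.card_filter_add_card_filter_not _
    have hsum1 : ∑ v ∈ D1, (code v).card = D1.card := by
      rw [Finset.sum_congr rfl (fun v hv => (Finset.mem_filter.mp hv).2), Finset.sum_const,
        smul_eq_mul, mul_one]
    have hge2 : ∀ v ∈ V.filter (fun v => ¬ (code v).card = 1), 2 ≤ (code v).card := by
      intro v hv
      obtain ⟨hvV, hv1⟩ := Finset.mem_filter.mp hv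
      have := hcode1 v hvV
      omega
    have hsum2ge : 2 * (V.filter (fun v => ¬ (code v).card = 1)).card
        ≤ ∑ v ∈ V.filter (fun v => ¬ (code v).card = 1), (code v).card := by
      calc 2 * (V.filter (fun v => ¬ (code v).card = 1)).card
          = ∑ _v ∈ V.filter (fun v => ¬ (code v).card = 1), 2 := by
            rw [Finset.sum_const, smul_eq_mul, mul_comm]
        _ ≤ _ := Finset.sum_le_sum hge2
    -- derive exact values
    have hD1card : D1.card = 2 * k := by omega
    have hNeq : ∑ v ∈ V, (code v).card = 4 * k := by omega
    have hsum2 : ∑ v ∈ V.filter (fun v => ¬ (code v).card = 1), (code v).card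
        = 2 * (V.filter (fun v => ¬ (code v).card = 1)).card := by omega
    have hcode2 : ∀ v ∈ V.filter (fun v => ¬ (code v).card = 1), (code v).card = 2 := by
      have h := (Finset.sum_eq_sum_iff_of_le hge2).mp
        (by rw [hsum2, Finset.sum_const, smul_eq_mul, mul_comm])
      intro v hv
      exact (h v hv).symm
    have hcovall : ∀ c ∈ Φ, (cov c).card = 2 := by
      have h := (Finset.sum_eq_sum_iff_of_le (fun c (_ : c ∈ Φ) => hcov2 c)).mp
        (by rw [hswap] at hNeq; rw [hNeq, Finset.sum_const, smul_eq_mul, hΦcard]; ring)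
      exact h
    have hD2eq : V.filter (fun v => ¬ (code v).card = 1) = D2 := by
      rw [hD2def]
      apply Finset.filter_congr
      intro v hv
      constructor
      · intro h
        exact hcode2 v (Finset.mem_filter.mpr ⟨hv, h⟩)
      · intro h
        simp only [h]
        omega
    have hD2card : D2.card = k := by
      rw [← hD2eq]; omega
    have hdich : ∀ v ∈ V, (code v).card = 1 ∨ (code v).card = 2 := by
      intro v hv
      by_cases h : (code v).card = 1
      · exact Or.inl h
      · exact Or.inr (hcode2 v (Finset.mem_filter.mpr ⟨hv, h⟩))
    -- surjectivity of f
    have hfsurj : ∀ c ∈ Φ, ∃ a ∈ D1, f a = c := by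
      have himg : D1.image f = Φ := by
        apply Finset.eq_of_subset_of_card_le
        · intro x hx
          obtain ⟨a, ha, rfl⟩ := Finset.mem_image.mp hx
          exact hfΦ a ha
        · rw [Finset.card_image_of_injOn hfinj, hD1card, hΦcard]
      intro c hc
      rw [← himg] at hc
      obtain ⟨a, ha, rfl⟩ := Finset.mem_image.mp hc
      exact ⟨a, ha, rfl⟩
    -- structure of each square
    have L : ∀ c : ℝ × ℝ, ∃ a b : ℤ × ℤ, c ∈ Φ →
        (a ∈ V ∧ (code a).card = 1 ∧ code a = {c} ∧ b ∈ V ∧ (code b).card = 2 ∧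
          a ≠ b ∧ cov c = {a, b}) := by
      intro c
      by_cases hc : c ∈ Φ
      swap
      · exact ⟨(0,0), (0,0), fun h => absurd h hc⟩
      obtain ⟨a, haD1, hfa⟩ := hfsurj c hc
      obtain ⟨haV, ha1⟩ := Finset.mem_filter.mp haD1
      have hcodea : code a = {c} := by rw [← hfa]; exact hfs a ha1
      have hacov : a ∈ cov c := by
        refine (hmem_cov c a).mpr ⟨haV, ?_⟩
        have : c ∈ code a := by rw [hcodea]; exact Finset.mem_singleton_self _
        exact ((hmem_code a c).mp this).2
      obtain ⟨x, y, hxy, hcovc⟩ := Finset.card_eq_two.mp (hcovall c hc)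
      have hbprop : ∀ b : ℤ × ℤ, b ∈ cov c → b ≠ a → b ∈ V ∧ (code b).card = 2 := by
        intro b hb hba
        obtain ⟨hbV, hbin⟩ := (hmem_cov c b).mp hb
        refine ⟨hbV, ?_⟩
        rcases hdich b hbV with h1 | h2
        · exfalso
          have hcb : c ∈ code b := (hmem_code b c).mpr ⟨hc, hbin⟩
          have : code b = {f b} := hfs b h1
          have hfb : f b = c := by
            have := this ▸ hcb
            exact (Finset.mem_singleton.mp this).symm
          have : code b = code a := by rw [hfs b h1, hfb, hcodea]
          exact hba (hcodeinj b hbV a haV this)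
        · exact h2
      have hamem : a = x ∨ a = y := by
        have := hcovc ▸ hacov
        simpa using this
      rcases hamem with rfl | rfl
      · have hy : y ∈ cov c := by rw [hcovc]; simp
        obtain ⟨hyV, hy2⟩ := hbprop y hy (Ne.symm hxy)
        exact ⟨a, y, fun _ => ⟨haV, ha1, hcodea, hyV, hy2, hxy, hcovc⟩⟩
      · have hx : x ∈ cov c := by rw [hcovc]; simp
        obtain ⟨hxV, hx2⟩ := hbprop x hx hxy
        refine ⟨a, x, fun _ => ⟨haV, ha1, hcodea, hxV, hx2, Ne.symm hxy, ?_⟩⟩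
        rw [hcovc, Finset.pair_comm]
    choose g e hge using L
    have hother : ∀ c ∈ Φ, ∀ b ∈ V, (code b).card = 2 → c ∈ code b → b = e c := by
      intro c hc b hbV hb2 hcb
      have hbcov : b ∈ cov c := (hmem_cov c b).mpr ⟨hbV, ((hmem_code b c).mp hcb).2⟩
      have h7 := (hge c hc).2.2.2.2.2.2
      rw [h7] at hbcov
      rcases Finset.mem_insert.mp hbcov with h | h
      · exfalso
        have := (hge c hc).2.1
        rw [← h] at this
        omega
      · exact Finset.mem_singleton.mp h
    have M : ∀ b : ℤ × ℤ, ∃ S S' : ℝ × ℝ, (code b).card = 2 →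
        (S ≠ S' ∧ code b = {S, S'}) := by
      intro b
      by_cases h : (code b).card = 2
      · obtain ⟨S, S', hne, heq⟩ := Finset.card_eq_two.mp h
        exact ⟨S, S', fun _ => ⟨hne, heq⟩⟩
      · exact ⟨(0,0), (0,0), fun hh => absurd hh h⟩
    choose σ σ' hM using M
    -- facts for b ∈ D2
    have hσmem : ∀ b ∈ D2, σ b ∈ code b ∧ σ' b ∈ code b ∧ σ b ≠ σ' b := by
      intro b hb
      obtain ⟨hbV, hb2⟩ := Finset.mem_filter.mp hb
      obtain ⟨hne, heq⟩ := hM b hb2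
      refine ⟨?_, ?_, hne⟩ <;> rw [heq] <;> simp
    have hσΦ : ∀ b ∈ D2, σ b ∈ Φ ∧ σ' b ∈ Φ := by
      intro b hb
      obtain ⟨h1, h2, _⟩ := hσmem b hb
      exact ⟨((hmem_code b (σ b)).mp h1).1, ((hmem_code b (σ' b)).mp h2).1⟩
    -- g basic facts
    have hgV : ∀ c ∈ Φ, g c ∈ V := fun c hc => (hge c hc).1
    have hgcode : ∀ c ∈ Φ, code (g c) = {c} := fun c hc => (hge c hc).2.2.1
    have hg1 : ∀ c ∈ Φ, (code (g c)).card = 1 := fun c hc => (hge c hc).2.1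
    have hginj : ∀ c ∈ Φ, ∀ c' ∈ Φ, g c = g c' → c = c' := by
      intro c hc c' hc' h
      have h1 := hgcode c hc
      have h2 := hgcode c' hc'
      rw [h] at h1
      exact Finset.singleton_injective (h1.symm.trans h2)
    have hgincov : ∀ c ∈ Φ, inSq (Tmap (g c)) c := by
      intro c hc
      have : c ∈ code (g c) := by rw [hgcode c hc]; exact Finset.mem_singleton_self _
      exact ((hmem_code (g c) c).mp this).2
    have hgne : ∀ c ∈ Φ, ∀ b ∈ D2, g c ≠ b := by
      intro c hc b hb h
      obtain ⟨_, hb2⟩ := Finset.mem_filter.mp hb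
      have := hg1 c hc
      rw [h] at this
      omega
    -- cross key : b recoverable from its squares
    have hkey : ∀ b ∈ D2, ∀ b' ∈ D2, ∀ S, S ∈ code b → ∀ S', S' ∈ code b' →
        g S = g S' → b = b' := by
      intro b hb b' hb' S hS S' hS' h
      obtain ⟨hbV, hb2⟩ := Finset.mem_filter.mp hb
      obtain ⟨hbV', hb2'⟩ := Finset.mem_filter.mp hb'
      have hSΦ : S ∈ Φ := ((hmem_code b S).mp hS).1
      have hSΦ' : S' ∈ Φ := ((hmem_code b' S').mp hS').1
      have hSS : S = S' := hginj S hSΦ S' hSΦ' h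
      rw [hother S hSΦ b hbV hb2 hS, hother S' hSΦ' b' hbV' hb2' hS', hSS]
    -- adjacency
    have hadj : ∀ b ∈ D2, gridAdj (g (σ b)) b ∧ gridAdj b (g (σ' b)) := by
      intro b hb
      obtain ⟨hbV, hb2⟩ := Finset.mem_filter.mp hb
      obtain ⟨h1, h2, _⟩ := hσmem b hb
      obtain ⟨hσ1, hσ2⟩ := hσΦ b hb
      constructor
      · exact adj_of_share (hgincov (σ b) hσ1) ((hmem_code b (σ b)).mp h1).2
          (hgne (σ b) hσ1 b hb)
      · exact adj_of_share ((hmem_code b (σ' b)).mp h2).2 (hgincov (σ' b) hσ2)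
          (Ne.symm (hgne (σ' b) hσ2 b hb))
    set tri : ℤ × ℤ → Finset (ℤ × ℤ) := fun b => {g (σ b), b, g (σ' b)} with htridef
    have htrimem : ∀ b x, x ∈ tri b ↔ x = g (σ b) ∨ x = b ∨ x = g (σ' b) := by
      intro b x
      rw [htridef]
      simp [Finset.mem_insert, Finset.mem_singleton]
    have htriinj : ∀ b ∈ D2, ∀ b' ∈ D2, tri b = tri b' → b = b' := by
      intro b hb b' hb' h
      have : b' ∈ tri b := by rw [h, htrimem]; tauto
      rcases (htrimem b b').mp this with h1 | h1 | h1
      · exact absurd h1.symm (hgne (σ b) (hσΦ b hb).1 b' hb')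
      · exact h1.symm
      · exact absurd h1.symm (hgne (σ' b) (hσΦ b hb).2 b' hb')
    refine ⟨D2.image tri, ?_, ?_, ?_, ?_, ?_⟩
    · rw [Finset.card_image_of_injOn htriinj, hD2card]
    · intro t ht
      obtain ⟨b, hb, rfl⟩ := Finset.mem_image.mp ht
      intro x hx
      rcases (htrimem b x).mp hx with h | h | h
      · rw [h]; exact hgV (σ b) (hσΦ b hb).1
      · rw [h]; exact (Finset.mem_filter.mp hb).1
      · rw [h]; exact hgV (σ' b) (hσΦ b hb).2
    · intro t1 ht1 t2 ht2 hne
      obtain ⟨b, hb, rfl⟩ := Finset.mem_image.mp ht1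
      obtain ⟨b', hb', rfl⟩ := Finset.mem_image.mp ht2
      have hbb : b ≠ b' := fun h => hne (by rw [h])
      rw [Finset.disjoint_left]
      intro x hx hx'
      obtain ⟨h1, h2, _⟩ := hσmem b hb
      obtain ⟨h1', h2', _⟩ := hσmem b' hb'
      rcases (htrimem b x).mp hx with h | h | h <;>
        rcases (htrimem b' x).mp hx' with h' | h' | h'
      · exact hbb (hkey b hb b' hb' (σ b) h1 (σ b') h1' (h ▸ h' ▸ rfl : g (σ b) = g (σ b')))
      · exact hgne (σ b) (hσΦ b hb).1 b' hb' (h ▸ h')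
      · exact hbb (hkey b hb b' hb' (σ b) h1 (σ' b') h2' (h ▸ h' ▸ rfl))
      · exact hgne (σ b') (hσΦ b' hb').1 b hb (h'.symm.trans h)
      · exact hbb (h ▸ h' : b = b')
      · exact hgne (σ' b') (hσΦ b' hb').2 b hb (h'.symm.trans h)
      · exact hbb (hkey b hb b' hb' (σ' b) h2 (σ b') h1' (h ▸ h' ▸ rfl))
      · exact hgne (σ' b) (hσΦ b hb).2 b' hb' (h ▸ h')
      · exact hbb (hkey b hb b' hb' (σ' b) h2 (σ' b') h2' (h ▸ h' ▸ rfl))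
    · ext v
      simp only [Finset.mem_biUnion, id]
      constructor
      · intro hv
        rcases hdich v hv with h1 | h2
        · -- v ∈ D1
          have hvD1 : v ∈ D1 := Finset.mem_filter.mpr ⟨hv, h1⟩
          set c := f v with hcdef
          have hcΦ : c ∈ Φ := hfΦ v hvD1
          have hcodev : code v = {c} := hfs v h1
          have hveq : v = g c := hcodeinj v hv (g c) (hgV c hcΦ)
            (by rw [hcodev, hgcode c hcΦ])
          set b := e c with hbdef
          have hbV : b ∈ V := (hge c hcΦ).2.2.2.1
          have hb2 : (code b).card = 2 := (hge c hcΦ).2.2.2.2.1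
          have hbD2 : b ∈ D2 := Finset.mem_filter.mpr ⟨hbV, hb2⟩
          have hbcov : b ∈ cov c := by
            rw [(hge c hcΦ).2.2.2.2.2.2]; simp [hbdef]
          have hcb : c ∈ code b :=
            (hmem_code b c).mpr ⟨hcΦ, ((hmem_cov c b).mp hbcov).2⟩
          obtain ⟨hne2, heq2⟩ := hM b hb2
          have : c = σ b ∨ c = σ' b := by
            have := heq2 ▸ hcb
            simpa using this
          refine ⟨tri b, Finset.mem_image_of_mem tri hbD2, ?_⟩
          rw [htrimem]
          rcases this with h | h
          · left; rw [hveq, h]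
          · right; right; rw [hveq, h]
        · have hvD2 : v ∈ D2 := Finset.mem_filter.mpr ⟨hv, h2⟩
          exact ⟨tri v, Finset.mem_image_of_mem tri hvD2, by rw [htrimem]; tauto⟩
      · rintro ⟨t, ht, hvt⟩
        obtain ⟨b, hb, rfl⟩ := Finset.mem_image.mp ht
        rcases (htrimem b v).mp hvt with h | h | h
        · rw [h]; exact hgV (σ b) (hσΦ b hb).1
        · rw [h]; exact (Finset.mem_filter.mp hb).1
        · rw [h]; exact hgV (σ' b) (hσΦ b hb).2
    · intro t ht
      obtain ⟨b, hb, rfl⟩ := Finset.mem_image.mp ht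
      refine ⟨g (σ b), b, g (σ' b), ?_, (hadj b hb).1, (hadj b hb).2, rfl⟩
      intro h
      have := hginj (σ b) (hσΦ b hb).1 (σ' b) (hσΦ b hb).2 h
      exact (hσmem b hb).2.2 this
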